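/- If an edge e with both endpoints in the same connected component of G (with cycle rank i) is added to G, then the homotopy polynomial of the resulting graph equals h_G(x) - x^i + x^{i+1}. -/

import Mathlib

open SimpleGraph Polynomial

/-- The vertices of a connected component `c` of `G`. -/
noncomputable def compVerts {V : Type*} [Fintype V] (G : SimpleGraph V)
    (c : G.ConnectedComponent) : Finset V := by
  classical exact Finset.univ.filter fun v => G.connectedComponentMk v = c

/-- The edges of `G` lying in the connected component `c`. -/
noncomputable def compEdges {V : Type*} [Fintype V] (G : SimpleGraph V)
    (c : G.ConnectedComponent) : Finset (Sym2 V) := by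
  classical exact G.edgeFinset.filter fun e => ∀ v ∈ e, G.connectedComponentMk v = c

/-- The cycle rank (number of independent loops) `|E(C)| - |V(C)| + 1` of the
connected component `c` of `G`. -/
noncomputable def compCycleRank {V : Type*} [Fintype V] (G : SimpleGraph V)
    (c : G.ConnectedComponent) : ℕ :=
  (compEdges G c).card + 1 - (compVerts G c).card

/-- The graph homotopy polynomial: the sum over connected components `c`
of `X ^ (cycle rank of c)`. -/
noncomputable def homotopyPoly {V : Type*} [Fintype V] (G : SimpleGraph V) : Polynomial ℤ := by
  classical exact ∑ c : G.ConnectedComponent, (Polynomial.X : Polynomial ℤ) ^ (compCycleRank G c)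


private lemma reach_sup_aux {V : Type*} {G : SimpleGraph V} {u v : V}
    (h : G.Reachable u v) {x y : V}
    (hr : (G ⊔ fromEdgeSet {s(u,v)}).Reachable x y) : G.Reachable x y := by
  obtain ⟨p⟩ := hr
  induction p with
  | nil => exact Reachable.refl _
  | cons ha _ ih =>
    refine Reachable.trans ?_ ih
    rcases ha with hG | hE
    · exact hG.reachable
    · rw [fromEdgeSet_adj, Set.mem_singleton_iff] at hE
      obtain ⟨he, hne⟩ := hE
      rw [Sym2.eq_iff] at he
      rcases he with ⟨rfl, rfl⟩ | ⟨rfl, rfl⟩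
      · exact h
      · exact h.symm

private lemma reach_sdiff_aux {V : Type*} {G : SimpleGraph V} {a b : V}
    (h : (G \ fromEdgeSet {s(a,b)}).Reachable a b) {x y : V}
    (hr : G.Reachable x y) : (G \ fromEdgeSet {s(a,b)}).Reachable x y := by
  obtain ⟨p⟩ := hr
  induction p with
  | nil => exact Reachable.refl _
  | @cons x' z' y' hxz q ih =>
    refine Reachable.trans ?_ ih
    by_cases he : s(x', z') = s(a, b)
    · rw [Sym2.eq_iff] at he
      rcases he with ⟨rfl, rfl⟩ | ⟨rfl, rfl⟩
      · exact h
      · exact h.symm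
    · exact Adj.reachable (by rw [sdiff_adj]; exact ⟨hxz, by simp [fromEdgeSet_adj, he]⟩)

private lemma conn_card_le {V : Type*} [Fintype V] (n : ℕ) :
    ∀ (G : SimpleGraph V) [Fintype G.edgeSet], G.edgeFinset.card = n →
      G.Connected → Fintype.card V ≤ n + 1 := by
  induction n using Nat.strong_induction_on with
  | _ n ih =>
    intro G _ hn hconn
    classical
    by_cases hac : G.IsAcyclic
    · have := IsTree.card_edgeFinset ⟨hconn, hac⟩
      omega
    · rw [IsAcyclic] at hac
      push_neg at hac
      obtain ⟨w, p, hp⟩ := hac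
      have hlen := hp.three_le_length
      have hne : p.edges ≠ [] := by
        intro hnil
        have : p.edges.length = 0 := by rw [hnil]; rfl
        rw [Walk.length_edges] at this
        omega
      obtain ⟨e, he⟩ := List.exists_mem_of_ne_nil _ hne
      induction e using Sym2.ind with
      | _ a b =>
        have ha : G.Adj a b := p.adj_of_mem_edges he
        have hreach : (G \ fromEdgeSet {s(a,b)}).Reachable a b :=
          (adj_and_reachable_delete_edges_iff_exists_cycle.mpr ⟨w, p, hp, he⟩).2
        set G₂ := G \ fromEdgeSet {s(a,b)} with hG₂
        have : Nonempty V := hconn.nonempty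
        have hconn₂ : G₂.Connected :=
          Connected.mk fun x y => reach_sdiff_aux hreach (hconn.preconnected x y)
        have : Fintype ↥G₂.edgeSet := Fintype.ofFinite _
        have hE : G₂.edgeFinset = G.edgeFinset.erase s(a,b) := by
          ext x
          simp only [mem_edgeFinset, hG₂, edgeSet_sdiff, edgeSet_fromEdgeSet,
            edgeSet_sdiff_sdiff_isDiag, Set.mem_diff, Set.mem_singleton_iff,
            Finset.mem_erase, mem_edgeFinset]
          tauto
        have hmem : s(a,b) ∈ G.edgeFinset := by rwa [mem_edgeFinset, mem_edgeSet]
        have hcard : G₂.edgeFinset.card = n - 1 := by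
          rw [hE, Finset.card_erase_of_mem hmem, hn]
        have hn1 : 1 ≤ n := by
          have := Finset.card_pos.mpr ⟨_, hmem⟩; omega
        have := ih (n-1) (by omega) G₂ hcard hconn₂
        omega

private lemma card_compVerts_le {V : Type*} [Fintype V] (G : SimpleGraph V)
    (c : G.ConnectedComponent) : (compVerts G c).card ≤ (compEdges G c).card + 1 := by
  classical
  obtain ⟨u0, rfl⟩ := c.exists_rep
  show (compVerts G (G.connectedComponentMk u0)).card ≤
    (compEdges G (G.connectedComponentMk u0)).card + 1
  set c := G.connectedComponentMk u0 with hc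
  set s : Set V := c.supp with hs
  have hu0 : u0 ∈ s := rfl
  have hconn : (G.induce s).Connected := by
    apply induce_connected_of_patches u0 hu0
    intro v hv
    have hr : G.Reachable u0 v := (ConnectedComponent.eq.mp (hv : _ = c)).symm
    obtain ⟨p⟩ := hr
    refine ⟨{x | x ∈ p.support}, ?_, p.start_mem_support, p.end_mem_support,
      (p.connected_induce_support).preconnected _ _⟩
    intro x hx
    exact ConnectedComponent.eq.mpr ((p.takeUntil x hx).reachable.symm)
  have hsv : s.toFinset = compVerts G c := by
    ext x; simp [hs, compVerts]
  have hV : (compVerts G c).card = Fintype.card ↥s := by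
    rw [← hsv, Set.toFinset_card]
  have hEcard : (G.induce s).edgeFinset.card = (compEdges G c).card := by
    apply Finset.card_bij (fun e _ => Sym2.map Subtype.val e)
    · intro e he
      induction e using Sym2.ind with
      | _ x y =>
        rw [mem_edgeFinset, mem_edgeSet] at he
        simp only [compEdges, Finset.mem_filter, mem_edgeFinset, mem_edgeSet, Sym2.map_pair_eq]
        refine ⟨he, ?_⟩
        intro z hz
        rcases Sym2.mem_iff.mp hz with rfl | rfl
        · exact x.2
        · exact y.2
    · intro e1 h1 e2 h2 hmap
      exact Sym2.map.injective Subtype.val_injective hmap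
    · intro a ha
      simp only [compEdges, Finset.mem_filter, mem_edgeFinset, mem_edgeSet] at ha
      induction a using Sym2.ind with
      | _ x y =>
        obtain ⟨hxy, hall⟩ := ha
        have hx : x ∈ s := hall x (by simp)
        have hy : y ∈ s := hall y (by simp)
        exact ⟨s(⟨x,hx⟩,⟨y,hy⟩), by rwa [mem_edgeFinset, mem_edgeSet], by simp⟩
  have := conn_card_le ((G.induce s).edgeFinset.card) (G.induce s) rfl hconn
  omega

set_option maxHeartbeats 1600000 in
private lemma homotopyPoly_eq {V : Type*} [Fintype V] (G : SimpleGraph V)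
    [Fintype G.ConnectedComponent] :
    homotopyPoly G = ∑ c : G.ConnectedComponent, (X : Polynomial ℤ) ^ compCycleRank G c := by
  unfold homotopyPoly
  congr!

theorem stmt_4 {V : Type*} [Fintype V] (G : SimpleGraph V) (u v : V)
    (huv : u ≠ v) (hadj : ¬ G.Adj u v)
    (hcomp : G.connectedComponentMk u = G.connectedComponentMk v) (i : ℕ)
    (hi : i = compCycleRank G (G.connectedComponentMk u)) :
    homotopyPoly (G ⊔ SimpleGraph.fromEdgeSet {s(u, v)}) =
      homotopyPoly G - Polynomial.X ^ i + Polynomial.X ^ (i + 1) := by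
  classical
  set G' := G ⊔ SimpleGraph.fromEdgeSet {s(u, v)} with hG'
  set cu := G.connectedComponentMk u with hcu
  have hruv : G.Reachable u v := ConnectedComponent.eq.mp hcomp
  have hre : ∀ x y : V, G'.Reachable x y ↔ G.Reachable x y := fun x y =>
    ⟨reach_sup_aux hruv, fun h => h.mono le_sup_left⟩
  let e : G'.ConnectedComponent ≃ G.ConnectedComponent :=
  { toFun := ConnectedComponent.lift G.connectedComponentMk
      (fun a b p _ => ConnectedComponent.eq.mpr ((hre a b).1 p.reachable))
    invFun := ConnectedComponent.map (Hom.ofLE le_sup_left)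
    left_inv := ConnectedComponent.ind fun a => rfl
    right_inv := ConnectedComponent.ind fun a => rfl }
  have hmk : ∀ x, e (G'.connectedComponentMk x) = G.connectedComponentMk x := fun x => rfl
  have key : ∀ (x : V) (c' : G'.ConnectedComponent),
      G'.connectedComponentMk x = c' ↔ G.connectedComponentMk x = e c' := by
    intro x c'
    constructor
    · rintro rfl; rfl
    · intro h; apply e.injective; rw [hmk, h]
  -- vertex sets agree
  have hverts : ∀ c', compVerts G' c' = compVerts G (e c') := by
    intro c'; ext x
    simp only [compVerts, Finset.mem_filter, Finset.mem_univ, true_and, key]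
  -- edge sets
  have hedgeSet : G'.edgeSet = insert s(u,v) G.edgeSet := by
    rw [hG', edgeSet_sup, edgeSet_fromEdgeSet]
    ext a
    simp only [Set.mem_union, Set.mem_diff, Set.mem_singleton_iff, Set.mem_setOf_eq,
      Set.mem_insert_iff]
    constructor
    · rintro (h | ⟨rfl, -⟩)
      · exact Or.inr h
      · exact Or.inl rfl
    · rintro (rfl | h)
      · exact Or.inr ⟨rfl, by simp [huv]⟩
      · exact Or.inl h
  have hmemE : ∀ (a : Sym2 V) c', a ∈ compEdges G' c' ↔
      ((a = s(u,v) ∨ a ∈ G.edgeSet) ∧ ∀ x ∈ a, G.connectedComponentMk x = e c') := by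
    intro a c'
    simp only [compEdges, Finset.mem_filter, mem_edgeFinset, hedgeSet, Set.mem_insert_iff, key]
  have hmemEG : ∀ (a : Sym2 V) (c : G.ConnectedComponent), a ∈ compEdges G c ↔
      (a ∈ G.edgeSet ∧ ∀ x ∈ a, G.connectedComponentMk x = c) := by
    intro a c
    simp only [compEdges, Finset.mem_filter, mem_edgeFinset]
  have hcaseA : ∀ c' : G'.ConnectedComponent, e c' ≠ cu →
      compEdges G' c' = compEdges G (e c') := by
    intro c' hne
    ext a
    rw [hmemE, hmemEG]
    constructor
    · rintro ⟨rfl | h1, h2⟩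
      · exact absurd ((h2 u (by simp)).symm.trans hcu.symm) hne
      · exact ⟨h1, h2⟩
    · rintro ⟨h1, h2⟩
      exact ⟨Or.inr h1, h2⟩
  have hcaseB : compEdges G' (e.symm cu) = insert s(u,v) (compEdges G cu) := by
    ext a
    rw [hmemE, Finset.mem_insert, hmemEG, Equiv.apply_symm_apply]
    constructor
    · rintro ⟨h1 | h1, h2⟩
      · exact Or.inl h1
      · exact Or.inr ⟨h1, h2⟩
    · rintro (rfl | ⟨h1, h2⟩)
      · refine ⟨Or.inl rfl, ?_⟩
        intro x hx
        rcases Sym2.mem_iff.mp hx with rfl | rfl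
        · rfl
        · exact hcomp.symm
      · exact ⟨Or.inr h1, h2⟩
  have hsuv_not : s(u,v) ∉ compEdges G cu := by
    rw [hmemEG]
    rintro ⟨h1, -⟩
    rw [mem_edgeSet] at h1
    exact hadj h1
  have hrankA : ∀ c' : G'.ConnectedComponent, e c' ≠ cu →
      compCycleRank G' c' = compCycleRank G (e c') := by
    intro c' hne
    rw [compCycleRank, compCycleRank, hcaseA c' hne, hverts]
  have hrankB : compCycleRank G' (e.symm cu) = i + 1 := by
    have hle := card_compVerts_le G cu
    rw [compCycleRank, hcaseB, hverts, Finset.card_insert_of_notMem hsuv_not,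
      Equiv.apply_symm_apply]
    rw [hi]
    simp only [compCycleRank]
    omega
  -- assemble sums
  rw [homotopyPoly_eq, homotopyPoly_eq]
  rw [Fintype.sum_equiv e _
    (fun c => if c = cu then (X : Polynomial ℤ)^(i+1) else (X : Polynomial ℤ) ^ compCycleRank G c)
    (by
      intro c'
      by_cases hc : e c' = cu
      · rw [hc, if_pos rfl]
        have hcc : c' = e.symm cu := by rw [← hc, Equiv.symm_apply_apply]
        rw [hcc, hrankB]
      · rw [if_neg hc, hrankA c' hc])]
  have hsplit1 : ∑ c : G.ConnectedComponent,
      (if c = cu then (X : Polynomial ℤ)^(i+1) else (X : Polynomial ℤ) ^ compCycleRank G c)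
      = (X : Polynomial ℤ)^(i+1) + ∑ c ∈ Finset.univ.erase cu,
          (X : Polynomial ℤ) ^ compCycleRank G c := by
    rw [← Finset.add_sum_erase _ _ (Finset.mem_univ cu), if_pos rfl]
    congr 1
    apply Finset.sum_congr rfl
    intro c hc
    rw [if_neg (Finset.mem_erase.mp hc).1]
  have hsplit2 : ∑ c : G.ConnectedComponent, (X : Polynomial ℤ) ^ compCycleRank G c
      = (X : Polynomial ℤ)^i + ∑ c ∈ Finset.univ.erase cu,
          (X : Polynomial ℤ) ^ compCycleRank G c := by
    rw [← Finset.add_sum_erase _ _ (Finset.mem_univ cu), hi, hcu]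
  rw [hsplit1, hsplit2]
  ring
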